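/- Let A = I + E and B = I + F be n×n real matrices with |E_{i,j}| ≤ δ and |F_{i,j}| ≤ δ for all i,j, where δ ≥ 0, and let Y ∈ ℝ^{n×n} have all entries nonnegative. Then |s(A·Y·B) − s(Y)| ≤ (2nδ + n²δ²)·s(Y), where s(X) denotes the sum of all entries of the matrix X. -/

import Mathlib

open Finset Matrix

/-- If `A = I + E` and `B = I + F` with all entries of `E`, `F` at most `δ`
in absolute value, and `Y` has nonnegative entries, then the entry sum of
`A·Y·B` differs from that of `Y` by at most `(2nδ + n²δ²)·s(Y)`. -/
theorem entry_sum_almost_identity_sandwich (n : ℕ)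
    (E F Y : Matrix (Fin n) (Fin n) ℝ) (δ : ℝ) (hδ : 0 ≤ δ)
    (hE : ∀ i j, |E i j| ≤ δ) (hF : ∀ i j, |F i j| ≤ δ)
    (hY : ∀ i j, 0 ≤ Y i j) :
    |(∑ i, ∑ j, ((1 + E) * Y * (1 + F)) i j) - ∑ i, ∑ j, Y i j|
      ≤ (2 * (n : ℝ) * δ + (n : ℝ) ^ 2 * δ ^ 2) * ∑ i, ∑ j, Y i j := by
  have hmul : (1 + E) * Y * (1 + F) = Y + (E * Y + (Y * F + E * Y * F)) := by
    noncomm_ring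
  set S := ∑ i, ∑ j, Y i j with hS
  have hSnn : 0 ≤ S := Finset.sum_nonneg fun i _ => Finset.sum_nonneg fun j _ => hY i j
  have h1 : |∑ i, ∑ j, (E * Y) i j| ≤ n * δ * S := by
    calc |∑ i, ∑ j, (E * Y) i j| ≤ ∑ i, |∑ j, (E * Y) i j| := Finset.abs_sum_le_sum_abs _ _
      _ ≤ ∑ i : Fin n, ∑ j, |(E * Y) i j| :=
        Finset.sum_le_sum fun i _ => Finset.abs_sum_le_sum_abs _ _
      _ ≤ ∑ i : Fin n, ∑ j, ∑ k, δ * Y k j := by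
        refine Finset.sum_le_sum fun i _ => Finset.sum_le_sum fun j _ => ?_
        rw [Matrix.mul_apply]
        refine (Finset.abs_sum_le_sum_abs _ _).trans (Finset.sum_le_sum fun k _ => ?_)
        rw [abs_mul, abs_of_nonneg (hY k j)]
        exact mul_le_mul_of_nonneg_right (hE i k) (hY k j)
      _ = n * δ * S := by
        rw [Finset.sum_const, Finset.card_univ, Fintype.card_fin, Finset.sum_comm]
        simp [← Finset.mul_sum, mul_assoc]
        exact Or.inl (Or.inl hS.symm)
  have h2 : |∑ i, ∑ j, (Y * F) i j| ≤ n * δ * S := by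
    calc |∑ i, ∑ j, (Y * F) i j| ≤ ∑ i, |∑ j, (Y * F) i j| := Finset.abs_sum_le_sum_abs _ _
      _ ≤ ∑ i : Fin n, ∑ j, |(Y * F) i j| :=
        Finset.sum_le_sum fun i _ => Finset.abs_sum_le_sum_abs _ _
      _ ≤ ∑ i : Fin n, ∑ j : Fin n, ∑ k, Y i k * δ := by
        refine Finset.sum_le_sum fun i _ => Finset.sum_le_sum fun j _ => ?_
        rw [Matrix.mul_apply]
        refine (Finset.abs_sum_le_sum_abs _ _).trans (Finset.sum_le_sum fun k _ => ?_)
        rw [abs_mul, abs_of_nonneg (hY i k)]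
        exact mul_le_mul_of_nonneg_left (hF k j) (hY i k)
      _ = n * δ * S := by
        simp only [Finset.sum_const, Finset.card_univ, Fintype.card_fin, ← Finset.sum_mul,
          nsmul_eq_mul]
        rw [← Finset.mul_sum, ← Finset.sum_mul]
        ring
  have h3 : |∑ i, ∑ j, (E * Y * F) i j| ≤ (n : ℝ) ^ 2 * δ ^ 2 * S := by
    calc |∑ i, ∑ j, (E * Y * F) i j| ≤ ∑ i, |∑ j, (E * Y * F) i j| :=
        Finset.abs_sum_le_sum_abs _ _
      _ ≤ ∑ i : Fin n, ∑ j, |(E * Y * F) i j| :=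
        Finset.sum_le_sum fun i _ => Finset.abs_sum_le_sum_abs _ _
      _ ≤ ∑ i : Fin n, ∑ j : Fin n, ∑ l, ∑ k, δ * Y k l * δ := by
        refine Finset.sum_le_sum fun i _ => Finset.sum_le_sum fun j _ => ?_
        have : (E * Y * F) i j = ∑ l, (∑ k, E i k * Y k l) * F l j := rfl
        rw [this]
        refine (Finset.abs_sum_le_sum_abs _ _).trans (Finset.sum_le_sum fun l _ => ?_)
        rw [abs_mul, ← Finset.sum_mul]
        refine mul_le_mul ?_ (hF l j) (abs_nonneg _) (Finset.sum_nonneg fun k _ => mul_nonneg hδ (hY k l))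
        refine (Finset.abs_sum_le_sum_abs _ _).trans ?_
        refine (Finset.sum_le_sum fun k _ => ?_).trans le_rfl
        rw [abs_mul, abs_of_nonneg (hY k l)]
        exact mul_le_mul_of_nonneg_right (hE i k) (hY k l)
      _ = (n : ℝ) ^ 2 * δ ^ 2 * S := by
        simp only [Finset.sum_const, Finset.card_univ, Fintype.card_fin, nsmul_eq_mul,
          ← Finset.mul_sum, ← Finset.sum_mul]
        rw [Finset.sum_comm]
        ring
  have hsum : (∑ i, ∑ j, ((1 + E) * Y * (1 + F)) i j)
      = S + ((∑ i, ∑ j, (E * Y) i j) + ((∑ i, ∑ j, (Y * F) i j) + ∑ i, ∑ j, (E * Y * F) i j)) := by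
    rw [hmul]
    simp [Matrix.add_apply, Finset.sum_add_distrib, hS]
  rw [hsum]
  rw [add_sub_cancel_left]
  calc |(∑ i, ∑ j, (E * Y) i j) + ((∑ i, ∑ j, (Y * F) i j) + ∑ i, ∑ j, (E * Y * F) i j)|
      ≤ |∑ i, ∑ j, (E * Y) i j| + (|∑ i, ∑ j, (Y * F) i j| + |∑ i, ∑ j, (E * Y * F) i j|) := by
        exact (abs_add_le _ _).trans (by gcongr; exact abs_add_le _ _)
    _ ≤ n * δ * S + (n * δ * S + (n : ℝ) ^ 2 * δ ^ 2 * S) := by gcongr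
    _ = (2 * (n : ℝ) * δ + (n : ℝ) ^ 2 * δ ^ 2) * S := by ring
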